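/- For the function f(x) = x·sin(1/x) for x ≠ 0, f(0) = 0 on ℝ, the radial epiderivative at 0 equals −|h|: f^r(0;h) = inf_{t>0} liminf_{u→h}(f(tu))/t = −|h| for all h ∈ ℝ. -/

import Mathlib

open Filter Topology

/-- The radial epiderivative of `f` at `x` in direction `h`:
`f^r(x;h) = inf_{t>0} liminf_{u → h} (f(x + t u) - f(x)) / t`, valued in `EReal`. -/
noncomputable def radEpi {X : Type*} [NormedAddCommGroup X] [NormedSpace ℝ X]
    (f : X → ℝ) (x h : X) : EReal :=
  ⨅ t : Set.Ioi (0 : ℝ),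
    Filter.liminf (fun u : X => (((f (x + (t : ℝ) • u) - f x) / (t : ℝ) : ℝ) : EReal)) (𝓝 h)

noncomputable def fSin : ℝ → ℝ := fun x => if x = 0 then 0 else x * Real.sin (1 / x)

lemma fSin_abs_le (x : ℝ) : |fSin x| ≤ |x| := by
  unfold fSin
  split_ifs with hx
  · simp [hx]
  · rw [abs_mul]
    calc |x| * |Real.sin (1 / x)| ≤ |x| * 1 := by
          gcongr
          exact abs_le.mpr ⟨Real.neg_one_le_sin _, Real.sin_le_one _⟩
      _ = |x| := mul_one _

lemma fSin_contAt {x : ℝ} (hx : x ≠ 0) : ContinuousAt fSin x := by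
  have hev : fSin =ᶠ[𝓝 x] fun y => y * Real.sin (1 / y) := by
    filter_upwards [eventually_ne_nhds hx] with y hy
    simp [fSin, hy]
  rw [continuousAt_congr hev]
  exact continuousAt_id.mul
    (Real.continuous_sin.continuousAt.comp (continuousAt_const.div continuousAt_id hx))

/-- For `f(x) = x sin(1/x)` (with `f(0) = 0`), the radial epiderivative at `0`
is `f^r(0;h) = -|h|`. -/
theorem radEpi_xSinInv : ∀ h : ℝ, radEpi fSin 0 h = ((-|h| : ℝ) : EReal) := by
  intro h
  have hf0 : fSin 0 = 0 := by simp [fSin]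
  unfold radEpi
  by_cases hh : h = 0
  · subst hh
    have hlim : ∀ t : Set.Ioi (0 : ℝ),
        Filter.liminf (fun u : ℝ =>
          (((fSin (0 + (t : ℝ) • u) - fSin 0) / (t : ℝ) : ℝ) : EReal)) (𝓝 (0:ℝ)) = (0 : EReal) := by
      intro t
      have ht : (0:ℝ) < t := t.2
      have htend : Tendsto (fun u : ℝ => ((fSin (0 + (t : ℝ) • u) - fSin 0) / (t : ℝ) : ℝ))
          (𝓝 0) (𝓝 0) := by
        refine squeeze_zero_norm (a := fun u : ℝ => |u|) ?_ ?_
        · intro u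
          have : |fSin ((t:ℝ) * u)| ≤ (t:ℝ) * |u| := by
            have := fSin_abs_le ((t:ℝ) * u)
            rwa [abs_mul, abs_of_pos ht] at this
          simp only [hf0, zero_add, smul_eq_mul, sub_zero, Real.norm_eq_abs, abs_div,
            abs_of_pos ht]
          rw [div_le_iff₀ ht]
          linarith [this]
        · simpa using (continuous_abs.tendsto (0:ℝ))
      have : Tendsto (fun u : ℝ =>
          (((fSin (0 + (t : ℝ) • u) - fSin 0) / (t : ℝ) : ℝ) : EReal)) (𝓝 0) (𝓝 (0:EReal)) := by
        exact_mod_cast (continuous_coe_real_ereal.tendsto 0).comp htend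
      exact this.liminf_eq
    have : Nonempty (Set.Ioi (0:ℝ)) := ⟨⟨1, by norm_num⟩⟩
    simp only [hlim, iInf_const]
    norm_num
  · -- h ≠ 0
    have hlim : ∀ t : Set.Ioi (0 : ℝ),
        Filter.liminf (fun u : ℝ =>
          (((fSin (0 + (t : ℝ) • u) - fSin 0) / (t : ℝ) : ℝ) : EReal)) (𝓝 h)
        = ((h * Real.sin (1 / ((t : ℝ) * h)) : ℝ) : EReal) := by
      intro t
      have ht : (0:ℝ) < t := t.2
      have hth : (t : ℝ) * h ≠ 0 := mul_ne_zero ht.ne' hh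
      have hcont : ContinuousAt (fun u : ℝ => ((fSin (0 + (t : ℝ) • u) - fSin 0) / (t : ℝ) : ℝ)) h := by
        simp only [hf0, zero_add, smul_eq_mul, sub_zero]
        exact ((fSin_contAt hth).comp (continuousAt_const.mul continuousAt_id)).div_const _
      have hval : ((fSin (0 + (t : ℝ) • h) - fSin 0) / (t : ℝ) : ℝ)
          = h * Real.sin (1 / ((t : ℝ) * h)) := by
        simp only [hf0, zero_add, smul_eq_mul, sub_zero, fSin, hth, if_false, if_true]
        field_simp
      have : Tendsto (fun u : ℝ =>
          (((fSin (0 + (t : ℝ) • u) - fSin 0) / (t : ℝ) : ℝ) : EReal)) (𝓝 h)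
          (𝓝 ((h * Real.sin (1 / ((t : ℝ) * h)) : ℝ) : EReal)) := by
        refine (continuous_coe_real_ereal.tendsto _).comp ?_
        rw [← hval]
        exact hcont
      exact this.liminf_eq
    simp only [hlim]
    apply le_antisymm
    · -- iInf ≤ -|h| : pick good t
      rcases Ne.lt_or_gt hh with hneg | hpos
      · -- h < 0 : take t with 1/(t h) = -(3π/2), i.e. t = -2/(3π h)
        have hπ : (0:ℝ) < Real.pi := Real.pi_pos
        set t₀ : ℝ := -2 / (3 * Real.pi * h) with ht₀
        have ht₀pos : 0 < t₀ := by
          apply div_pos_iff.mpr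
          right
          constructor <;> nlinarith
        refine le_trans (iInf_le _ ⟨t₀, ht₀pos⟩) ?_
        have harg : 1 / (t₀ * h) = -(Real.pi / 2 + Real.pi) := by
          rw [ht₀]
          field_simp
          ring
        rw [harg, Real.sin_neg, Real.sin_add_pi, Real.sin_pi_div_two]
        have : h * - -1 = -|h| := by rw [abs_of_neg hneg]; ring
        exact EReal.coe_le_coe_iff.mpr (le_of_eq this)
      · -- h > 0 : take t = 2/(3π h)
        have hπ : (0:ℝ) < Real.pi := Real.pi_pos
        set t₀ : ℝ := 2 / (3 * Real.pi * h) with ht₀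
        have ht₀pos : 0 < t₀ := by positivity
        refine le_trans (iInf_le _ ⟨t₀, ht₀pos⟩) ?_
        have harg : 1 / (t₀ * h) = Real.pi / 2 + Real.pi := by
          rw [ht₀]
          field_simp
          ring
        rw [harg, Real.sin_add_pi, Real.sin_pi_div_two]
        have : h * -1 = -|h| := by rw [abs_of_pos hpos]; ring
        exact EReal.coe_le_coe_iff.mpr (le_of_eq this)
    · apply le_iInf
      intro t
      apply EReal.coe_le_coe_iff.mpr
      have hs1 := Real.neg_one_le_sin (1 / ((t:ℝ) * h))
      have hs2 := Real.sin_le_one (1 / ((t:ℝ) * h))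
      rcases le_or_gt 0 h with hph | hph
      · rw [abs_of_nonneg hph]; nlinarith
      · rw [abs_of_neg hph]; nlinarith
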